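/- Let S = S₁ ⊕ … ⊕ S_k be a schedule in increasing irreducible structure for (N, ⊴, c) with corresponding irreducible intervals I₁,…,I_k, and let B ∈ ℝ≥0 ∪ {∞}. Then there exists l ∈ {0,…,k} such that I₁ ∪ … ∪ I_l attains the minimum of c(I) over all ideals I of ⊴ with b(I) ≤ B. -/

import Mathlib

set_option linter.unusedSectionVars false


open List

variable {ι : Type*} [DecidableEq ι]

/-- Total cost of a schedule (list of jobs). -/
def listCost (c : ι → ℝ) (S : List ι) : ℝ := (S.map c).sum

/-- Budget of a schedule: maximum cost of a prefix (the empty prefix has cost 0). -/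
def listBudget (c : ι → ℝ) : List ι → ℝ
  | [] => 0
  | j :: t => max 0 (c j + listBudget c t)

/-- Return of a schedule. -/
def listReturn (c : ι → ℝ) (S : List ι) : ℝ := listCost c S - listBudget c S

/-- `S` enumerates the finite job set `N` without repetition. -/
def IsScheduleOf (N : Finset ι) (S : List ι) : Prop :=
  S.Nodup ∧ ∀ j, j ∈ S ↔ j ∈ N

/-- `S` is a linear extension of the precedence relation `r` (restricted to its jobs). -/
def RespectsOrder (r : ι → ι → Prop) (S : List ι) : Prop :=
  ∀ i j, r i j → i ∈ S → j ∈ S → S.idxOf i ≤ S.idxOf j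

/-- Minimum budget over all feasible schedules of the job set `X`. -/
noncomputable def setBudget (r : ι → ι → Prop) (c : ι → ℝ) (X : Finset ι) : ℝ :=
  sInf {b | ∃ S : List ι, IsScheduleOf X S ∧ RespectsOrder r S ∧ listBudget c S = b}

/-- Total cost of a job set. -/
def setCost (c : ι → ℝ) (X : Finset ι) : ℝ := ∑ j ∈ X, c j

/-- Return of a job set. -/
noncomputable def setReturn (r : ι → ι → Prop) (c : ι → ℝ) (X : Finset ι) : ℝ :=
  setCost c X - setBudget r c X

/-- The cbr-preorder on job sets. -/
def cbrLE (r : ι → ι → Prop) (c : ι → ℝ) (X Y : Finset ι) : Prop :=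
  (setCost c X < 0 ∧ 0 ≤ setCost c Y) ∨
  (setCost c X < 0 ∧ setCost c Y < 0 ∧ setBudget r c X < setBudget r c Y) ∨
  (setCost c X < 0 ∧ setCost c Y < 0 ∧ setBudget r c X = setBudget r c Y ∧
    setReturn r c X ≤ setReturn r c Y) ∨
  (0 ≤ setCost c X ∧ 0 ≤ setCost c Y ∧ setReturn r c X ≤ setReturn r c Y)

/-- `J` is an ideal (downward-closed subset) of `r` restricted to `I`. -/
def IsIdealIn (r : ι → ι → Prop) (I J : Finset ι) : Prop :=
  J ⊆ I ∧ ∀ j ∈ J, ∀ i ∈ I, r i j → i ∈ J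

/-- `F` is a filter (upward-closed subset) of `r` restricted to `I`. -/
def IsFilterIn (r : ι → ι → Prop) (I F : Finset ι) : Prop :=
  F ⊆ I ∧ ∀ i ∈ F, ∀ j ∈ I, r i j → j ∈ F

/-- `I` is an interval of `r` on `N`: intersection of an ideal and a filter. -/
def IsIntervalIn (r : ι → ι → Prop) (N I : Finset ι) : Prop :=
  ∃ J F, IsIdealIn r N J ∧ IsFilterIn r N F ∧ I = J ∩ F

/-- An irreducible interval: every ideal of the restricted order is `⪰` the interval. -/
def IsIrreducibleIn (r : ι → ι → Prop) (c : ι → ℝ) (N I : Finset ι) : Prop :=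
  IsIntervalIn r N I ∧ ∀ J, IsIdealIn r I J → cbrLE r c I J

/-- A schedule (given as blocks `SS`) in increasing irreducible structure. -/
def IncIrrStructure (r : ι → ι → Prop) (c : ι → ℝ) (N : Finset ι)
    (SS : List (List ι)) : Prop :=
  IsScheduleOf N SS.flatten ∧ RespectsOrder r SS.flatten ∧
  (∀ S ∈ SS, IsIrreducibleIn r c N S.toFinset ∧ RespectsOrder r S ∧
    listBudget c S = setBudget r c S.toFinset) ∧
  ∀ i j : Fin SS.length, i < j → cbrLE r c (SS.get i).toFinset (SS.get j).toFinset


section Helpers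

variable {r : ι → ι → Prop} {c : ι → ℝ}

/-- pairwise formulation of respecting the order -/
def Ok (r : ι → ι → Prop) (S : List ι) : Prop :=
  S.Pairwise fun a b => r b a → a = b

lemma listCost_cons (a : ι) (S : List ι) :
    listCost c (a :: S) = c a + listCost c S := by simp [listCost]

lemma listCost_append (S T : List ι) :
    listCost c (S ++ T) = listCost c S + listCost c T := by simp [listCost]

lemma listBudget_nonneg (S : List ι) : 0 ≤ listBudget c S := by
  cases S with
  | nil => exact le_rfl
  | cons a t => exact le_max_left _ _

lemma listBudget_append (S T : List ι) :
    listBudget c (S ++ T) = max (listBudget c S) (listCost c S + listBudget c T) := by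
  induction S with
  | nil =>
      simp [listBudget, listCost, max_eq_right (listBudget_nonneg T)]
  | cons a t ih =>
      simp only [List.cons_append, listBudget, List.append_eq, ih, listCost_cons]
      conv_rhs => rw [max_assoc, add_assoc, max_add_add_left]

lemma listCost_take_le (S : List ι) (t : ℕ) : listCost c (S.take t) ≤ listBudget c S := by
  induction S generalizing t with
  | nil => simp [listCost, listBudget]
  | cons a tl ih =>
      cases t with
      | zero => simpa [listCost] using listBudget_nonneg (c := c) (a :: tl)
      | succ t =>
          rw [List.take_succ_cons, listCost_cons]
          simp only [listBudget]
          calc c a + listCost c (tl.take t) ≤ c a + listBudget c tl :=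
                by have := ih t; linarith
            _ ≤ max 0 (c a + listBudget c tl) := le_max_right _ _

lemma exists_take_budget (S : List ι) : ∃ t, listCost c (S.take t) = listBudget c S := by
  induction S with
  | nil => exact ⟨0, by simp [listCost, listBudget]⟩
  | cons a tl ih =>
      obtain ⟨t, ht⟩ := ih
      rcases le_or_gt (c a + listBudget c tl) 0 with h | h
      · refine ⟨0, ?_⟩
        simp [listCost, listBudget, max_eq_left h]
      · refine ⟨t + 1, ?_⟩
        rw [List.take_succ_cons, listCost_cons, ht]
        simp [listBudget, max_eq_right h.le]

lemma exists_take_filter (p : ι → Bool) (l : List ι) (s : ℕ) :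
    ∃ t, (l.take t).filter p = (l.filter p).take s := by
  induction l generalizing s with
  | nil => exact ⟨0, by simp⟩
  | cons a tl ih =>
      cases s with
      | zero => exact ⟨0, by simp⟩
      | succ s =>
          by_cases hp : p a
          · obtain ⟨t, ht⟩ := ih s
            exact ⟨t + 1, by simp [List.take_succ_cons, List.filter_cons, hp, ht]⟩
          · obtain ⟨t, ht⟩ := ih (s + 1)
            exact ⟨t + 1, by simp [List.take_succ_cons, List.filter_cons, hp, ht]⟩

lemma respectsOrder_of_ok {S : List ι} (h : Ok r S) : RespectsOrder r S := by
  intro i j hij hi hj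
  by_contra hc
  push_neg at hc
  have hj' : S.idxOf j < S.length := List.idxOf_lt_length_iff.2 hj
  have hi' : S.idxOf i < S.length := List.idxOf_lt_length_iff.2 hi
  have hpair := List.pairwise_iff_get.1 h ⟨S.idxOf j, hj'⟩ ⟨S.idxOf i, hi'⟩ hc
  simp only [List.idxOf_get] at hpair
  have hji := hpair hij
  rw [hji] at hc
  exact lt_irrefl _ hc

lemma ok_of_respectsOrder {S : List ι} (hnd : S.Nodup) (h : RespectsOrder r S) :
    Ok r S := by
  rw [Ok, List.pairwise_iff_get]
  intro i j hij hr'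
  have h1 := h (S.get j) (S.get i) hr' (S.get_mem _) (S.get_mem _)
  rw [List.get_idxOf hnd, List.get_idxOf hnd] at h1
  have hij' : (i : ℕ) < (j : ℕ) := hij
  exact absurd h1 (by omega)

lemma schedule_toFinset {X : Finset ι} {S : List ι} (h : IsScheduleOf X S) :
    S.toFinset = X := by
  ext a; rw [List.mem_toFinset]; exact h.2 a

lemma isScheduleOf_toFinset {S : List ι} (hnd : S.Nodup) : IsScheduleOf S.toFinset S :=
  ⟨hnd, fun j => by simp⟩

lemma isScheduleOf_filter {X J : Finset ι} {S : List ι} (hS : IsScheduleOf X S)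
    (hJ : J ⊆ X) : IsScheduleOf J (S.filter (· ∈ J)) := by
  refine ⟨hS.1.filter _, fun j => ?_⟩
  simp only [List.mem_filter, decide_eq_true_eq]
  exact ⟨fun h => h.2, fun h => ⟨(hS.2 j).2 (hJ h), h⟩⟩

lemma toFinset_filter_mem (l : List ι) (K : Finset ι) :
    (l.filter (· ∈ K)).toFinset = l.toFinset ∩ K := by
  ext a; simp [List.mem_filter]

lemma toFinset_filter_not_mem (l : List ι) (K : Finset ι) :
    (l.filter (· ∉ K)).toFinset = l.toFinset \ K := by
  ext a; simp [List.mem_filter]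

lemma listCost_eq_setCost {S : List ι} (hnd : S.Nodup) :
    listCost c S = setCost c S.toFinset := (List.sum_toFinset _ hnd).symm

lemma setCost_empty : setCost c (∅ : Finset ι) = 0 := Finset.sum_empty

lemma setCost_split (I A : Finset ι) :
    setCost c I = setCost c (I ∩ A) + setCost c (I \ A) := by
  classical
  have hu : (I ∩ A) ∪ (I \ A) = I := by
    ext a
    simp only [Finset.mem_union, Finset.mem_inter, Finset.mem_sdiff]
    tauto
  have hd : Disjoint (I ∩ A) (I \ A) := by
    refine Finset.disjoint_left.2 fun a ha ha' => ?_
    exact (Finset.mem_sdiff.1 ha').2 (Finset.mem_inter.1 ha).2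
  simp only [setCost]
  conv_lhs => rw [← hu]
  exact Finset.sum_union hd

lemma isIdealIn_empty (N : Finset ι) : IsIdealIn r N ∅ :=
  ⟨Finset.empty_subset _, by simp⟩

lemma isIdealIn_trans {N X J : Finset ι} (hX : IsIdealIn r N X) (hJ : IsIdealIn r X J) :
    IsIdealIn r N J :=
  ⟨hJ.1.trans hX.1, fun j hj i hi hij => hJ.2 j hj i (hX.2 j (hJ.1 hj) i hi hij) hij⟩

lemma isIdealIn_inter {N A I : Finset ι} (hI : IsIdealIn r N I) (hA : A ⊆ N) :
    IsIdealIn r A (I ∩ A) := by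
  constructor
  · exact Finset.inter_subset_right
  · intro j hj i hi hij
    rw [Finset.mem_inter] at hj ⊢
    exact ⟨hI.2 j hj.1 i (hA hi) hij, hi⟩

lemma isIdealIn_union {A I J : Finset ι} (hI : IsIdealIn r A I) (hJ : IsIdealIn r A J) :
    IsIdealIn r A (I ∪ J) := by
  constructor
  · exact Finset.union_subset hI.1 hJ.1
  · intro j hj i hi hij
    rw [Finset.mem_union] at hj ⊢
    rcases hj with hj | hj
    · exact Or.inl (hI.2 j hj i hi hij)
    · exact Or.inr (hJ.2 j hj i hi hij)

lemma isIdealIn_take {X : Finset ι} {T : List ι} (hT : IsScheduleOf X T) (hok : Ok r T)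
    (t : ℕ) : IsIdealIn r X (T.take t).toFinset := by
  constructor
  · intro a ha
    rw [List.mem_toFinset] at ha
    exact (hT.2 a).1 (List.mem_of_mem_take ha)
  · intro j hj i hi hij
    rw [List.mem_toFinset] at hj ⊢
    by_cases h : i ∈ T.take t
    · exact h
    · have hiT : i ∈ T := (hT.2 i).2 hi
      have hidrop : i ∈ T.drop t := by
        rcases List.mem_append.1 ((List.take_append_drop t T).symm ▸ hiT) with h' | h'
        · exact absurd h' h
        · exact h'
      have hok' : Ok r (T.take t ++ T.drop t) := by
        rw [List.take_append_drop]; exact hok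
      exact ((List.pairwise_append.1 hok').2.2 j hj i hidrop hij) ▸ hj

lemma take_toFinset_mono {T : List ι} {u t : ℕ} (h : u ≤ t) :
    (T.take u).toFinset ⊆ (T.take t).toFinset := by
  intro a ha
  rw [List.mem_toFinset] at *
  have heq : T.take u = (T.take t).take u := by
    rw [List.take_take, min_eq_left h]
  exact List.mem_of_mem_take (heq ▸ ha)

end Helpers

section Budget

variable {r : ι → ι → Prop} {c : ι → ℝ}

lemma setBudget_def (X : Finset ι) :
    setBudget r c X =
      sInf {b | ∃ S : List ι, IsScheduleOf X S ∧ RespectsOrder r S ∧ listBudget c S = b} :=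
  rfl

lemma budget_set_bddBelow (X : Finset ι) :
    BddBelow {b | ∃ S : List ι, IsScheduleOf X S ∧ RespectsOrder r S ∧ listBudget c S = b} := by
  refine ⟨0, ?_⟩
  rintro b ⟨S, -, -, rfl⟩
  exact listBudget_nonneg S

lemma exists_schedule (hr : IsPartialOrder ι r) (X : Finset ι) :
    ∃ S : List ι, IsScheduleOf X S ∧ Ok r S := by
  classical
  induction X using Finset.strongInduction with
  | _ X ih =>
    rcases X.eq_empty_or_nonempty with rfl | hne
    · exact ⟨[], ⟨List.nodup_nil, by simp⟩, List.Pairwise.nil⟩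
    · obtain ⟨x, hx, hmin⟩ :=
        Finset.exists_min_image X (fun x => (X.filter fun y => r y x).card) hne
      have hxmin : ∀ y ∈ X, r y x → y = x := by
        intro y hy hyx
        by_contra hne'
        have hss : X.filter (fun z => r z y) ⊂ X.filter (fun z => r z x) := by
          rw [Finset.ssubset_iff_of_subset]
          · refine ⟨x, ?_, ?_⟩
            · rw [Finset.mem_filter]; exact ⟨hx, refl_of r x⟩
            · rw [Finset.mem_filter]
              rintro ⟨-, hxy⟩
              exact hne' (antisymm_of r hyx hxy)
          · intro z hz
            rw [Finset.mem_filter] at hz ⊢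
            exact ⟨hz.1, trans_of r hz.2 hyx⟩
        have h1 := Finset.card_lt_card hss
        have h2 := hmin y hy
        omega
      obtain ⟨S, hS, hok⟩ := ih (X.erase x) (Finset.erase_ssubset hx)
      refine ⟨x :: S, ⟨?_, ?_⟩, ?_⟩
      · rw [List.nodup_cons]
        exact ⟨fun hxs => (Finset.notMem_erase x X) ((hS.2 x).1 hxs), hS.1⟩
      · intro j
        rw [List.mem_cons]
        constructor
        · rintro (rfl | hj)
          · exact hx
          · exact Finset.mem_of_mem_erase ((hS.2 j).1 hj)
        · intro hj
          by_cases h : j = x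
          · exact Or.inl h
          · exact Or.inr ((hS.2 j).2 (Finset.mem_erase.2 ⟨h, hj⟩))
      · rw [Ok, List.pairwise_cons]
        refine ⟨fun b hb hrb => ?_, hok⟩
        exact (hxmin b (Finset.mem_of_mem_erase ((hS.2 b).1 hb)) hrb).symm

lemma budget_set_nonempty (hr : IsPartialOrder ι r) (X : Finset ι) :
    {b | ∃ S : List ι, IsScheduleOf X S ∧ RespectsOrder r S ∧ listBudget c S = b}.Nonempty := by
  obtain ⟨S, hS, hok⟩ := exists_schedule hr X
  exact ⟨listBudget c S, S, hS, respectsOrder_of_ok hok, rfl⟩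

lemma budget_set_finite (X : Finset ι) :
    {b | ∃ S : List ι, IsScheduleOf X S ∧ RespectsOrder r S ∧ listBudget c S = b}.Finite := by
  classical
  apply Set.Finite.subset (Set.Finite.image (listBudget c)
    (X.toList.permutations.finite_toSet))
  rintro b ⟨S, hS, -, rfl⟩
  refine ⟨S, ?_, rfl⟩
  show S ∈ X.toList.permutations
  rw [List.mem_permutations]
  refine List.Subperm.antisymm ?_ ?_
  · exact List.subperm_of_subset hS.1
      (fun a ha => by rw [Finset.mem_toList]; exact (hS.2 a).1 ha)
  · exact List.subperm_of_subset X.nodup_toList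
      (fun a ha => (hS.2 a).2 (by rwa [Finset.mem_toList] at ha))

lemma setBudget_le {X : Finset ι} {S : List ι} (hS : IsScheduleOf X S)
    (hre : RespectsOrder r S) : setBudget r c X ≤ listBudget c S := by
  rw [setBudget_def]
  exact csInf_le (budget_set_bddBelow X) ⟨S, hS, hre, rfl⟩

lemma setBudget_nonneg (hr : IsPartialOrder ι r) (X : Finset ι) :
    0 ≤ setBudget r c X := by
  rw [setBudget_def]
  apply le_csInf (budget_set_nonempty hr X)
  rintro b ⟨S, -, -, rfl⟩
  exact listBudget_nonneg S

lemma setBudget_empty : setBudget r c (∅ : Finset ι) = 0 := by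
  have hmem : (0 : ℝ) ∈ {b | ∃ S : List ι,
      IsScheduleOf (∅ : Finset ι) S ∧ RespectsOrder r S ∧ listBudget c S = b} :=
    ⟨[], ⟨List.nodup_nil, by simp⟩, fun i j _ hi _ => absurd hi List.not_mem_nil, rfl⟩
  rw [setBudget_def]
  refine le_antisymm (csInf_le (budget_set_bddBelow _) hmem) (le_csInf ⟨0, hmem⟩ ?_)
  rintro b ⟨S, -, -, rfl⟩
  exact listBudget_nonneg S

lemma exists_opt_schedule (hr : IsPartialOrder ι r) (X : Finset ι) :
    ∃ S : List ι, IsScheduleOf X S ∧ RespectsOrder r S ∧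
      listBudget c S = setBudget r c X := by
  have h := Set.Nonempty.csInf_mem (budget_set_nonempty (c := c) hr X) (budget_set_finite X)
  obtain ⟨S, h1, h2, h3⟩ := h
  exact ⟨S, h1, h2, by rw [h3, setBudget_def]⟩

lemma exists_prefix_ge_budget {X K : Finset ι} {T : List ι} (hT : IsScheduleOf X T)
    (hok : Ok r T) (hK : K ⊆ X) :
    ∃ v, setBudget r c K ≤ setCost c ((T.take v).toFinset ∩ K) := by
  classical
  have hsch := isScheduleOf_filter hT hK
  have hokK : Ok r (T.filter (· ∈ K)) := List.Pairwise.sublist (List.filter_sublist (l := T)) hok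
  have h1 : setBudget r c K ≤ listBudget c (T.filter (· ∈ K)) :=
    setBudget_le hsch (respectsOrder_of_ok hokK)
  obtain ⟨s, hs⟩ := exists_take_budget (c := c) (T.filter (· ∈ K))
  obtain ⟨v, hv⟩ := exists_take_filter (· ∈ K) T s
  refine ⟨v, ?_⟩
  have hnd : ((T.take v).filter (· ∈ K)).Nodup := (hT.1.sublist (List.take_sublist v T)).filter _
  calc setBudget r c K ≤ listCost c ((T.filter (· ∈ K)).take s) := by rw [hs]; exact h1
    _ = setCost c ((T.take v).toFinset ∩ K) := by
        rw [← hv, listCost_eq_setCost hnd, toFinset_filter_mem]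

lemma cbrLE_budget_le {X Y : Finset ι} (h : cbrLE r c X Y) (hY : setCost c Y < 0) :
    setBudget r c X ≤ setBudget r c Y := by
  rcases h with ⟨-, h⟩ | ⟨-, -, h⟩ | ⟨-, -, h, -⟩ | ⟨-, h, -⟩
  · linarith
  · exact h.le
  · exact h.le
  · linarith

lemma cbrLE_cost_nonneg {X Y : Finset ι} (h : cbrLE r c X Y) (hX : 0 ≤ setCost c X) :
    0 ≤ setCost c Y := by
  rcases h with ⟨h, -⟩ | ⟨h, -⟩ | ⟨h, -⟩ | ⟨-, h, -⟩ <;> linarith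

end Budget

section Main

variable {r : ι → ι → Prop} {c : ι → ℝ}

/-- The hypotheses of an increasing irreducible structure, in a form suitable
for induction on the list of blocks. -/
def Hyp (r : ι → ι → Prop) (c : ι → ℝ) (SS : List (List ι)) : Prop :=
  SS.flatten.Nodup ∧ Ok r SS.flatten ∧
    (∀ S ∈ SS, (∀ J, IsIdealIn r S.toFinset J → cbrLE r c S.toFinset J) ∧
      listBudget c S = setBudget r c S.toFinset) ∧
    ∀ i j : Fin SS.length, i < j → cbrLE r c (SS.get i).toFinset (SS.get j).toFinset

lemma Hyp.tail {A : List ι} {SS : List (List ι)} (h : Hyp r c (A :: SS)) :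
    Hyp r c SS := by
  obtain ⟨h1, h2, h3, h4⟩ := h
  rw [List.flatten_cons] at h1 h2
  refine ⟨(List.nodup_append.1 h1).2.1, (List.pairwise_append.1 h2).2.1,
    fun S hS => h3 S (List.mem_cons_of_mem _ hS), fun i j hij => ?_⟩
  exact h4 i.succ j.succ (by rwa [Fin.succ_lt_succ_iff])

lemma Hyp.cross {A : List ι} {SS : List (List ι)} (h : Hyp r c (A :: SS)) {a b : ι}
    (ha : a ∈ A) (hb : b ∈ SS.flatten) : r b a → a = b := by
  have h2 := h.2.1
  rw [List.flatten_cons] at h2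
  exact (List.pairwise_append.1 h2).2.2 a ha b hb

lemma Hyp.disj {A : List ι} {SS : List (List ι)} (h : Hyp r c (A :: SS)) {a : ι}
    (ha : a ∈ A) : a ∉ SS.flatten := by
  have h1 := h.1
  rw [List.flatten_cons, List.nodup_append] at h1
  exact fun hf => h1.2.2 a ha a hf rfl

lemma Hyp.nodup_head {A : List ι} {SS : List (List ι)} (h : Hyp r c (A :: SS)) :
    A.Nodup := by
  have h1 := h.1
  rw [List.flatten_cons, List.nodup_append] at h1
  exact h1.1

lemma Hyp.ok_head {A : List ι} {SS : List (List ι)} (h : Hyp r c (A :: SS)) :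
    Ok r A := by
  have h2 := h.2.1
  rw [List.flatten_cons] at h2
  exact (List.pairwise_append.1 h2).1

lemma subset_flatten_head (A : List ι) (SS : List (List ι)) :
    A.toFinset ⊆ ((A :: SS).flatten).toFinset := by
  intro a ha
  rw [List.mem_toFinset] at *
  rw [List.flatten_cons]
  exact List.mem_append_left _ ha

lemma subset_flatten_tail (A : List ι) (SS : List (List ι)) :
    (SS.flatten).toFinset ⊆ ((A :: SS).flatten).toFinset := by
  intro a ha
  rw [List.mem_toFinset] at *
  rw [List.flatten_cons]
  exact List.mem_append_right _ ha

lemma diff_eq_inter_tail {A : List ι} {SS : List (List ι)} {I : Finset ι}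
    (hsub : I ⊆ ((A :: SS).flatten).toFinset) (hdisj : ∀ a ∈ A, a ∉ SS.flatten) :
    I \ A.toFinset = I ∩ (SS.flatten).toFinset := by
  ext a
  simp only [Finset.mem_sdiff, Finset.mem_inter, List.mem_toFinset]
  constructor
  · rintro ⟨ha, hna⟩
    refine ⟨ha, ?_⟩
    have h := hsub ha
    rw [List.mem_toFinset, List.flatten_cons, List.mem_append] at h
    rcases h with h | h
    · exact absurd h hna
    · exact h
  · rintro ⟨ha, hfl⟩
    exact ⟨ha, fun hA' => hdisj a hA' hfl⟩

lemma isIdealIn_flatten_take {SS : List (List ι)} (hok : Ok r SS.flatten) (l : ℕ) :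
    IsIdealIn r (SS.flatten).toFinset ((SS.take l).flatten.toFinset) := by
  have heq : SS.flatten = (SS.take l).flatten ++ (SS.drop l).flatten := by
    rw [← List.flatten_append, List.take_append_drop]
  constructor
  · intro a ha
    rw [List.mem_toFinset] at *
    rw [heq]
    exact List.mem_append_left _ ha
  · intro j hj i hi hij
    rw [List.mem_toFinset] at hj hi ⊢
    rw [heq] at hi
    rcases List.mem_append.1 hi with h | h
    · exact h
    · have hok' : Ok r ((SS.take l).flatten ++ (SS.drop l).flatten) := by
        rw [← heq]; exact hok
      exact ((List.pairwise_append.1 hok').2.2 j hj i h hij) ▸ hj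

/-- CL0: if the first block has nonnegative cost, every ideal has nonnegative cost. -/
lemma cl0 : ∀ (n : ℕ) (A : List ι) (SS : List (List ι)), SS.length < n →
    Hyp r c (A :: SS) → 0 ≤ setCost c A.toFinset →
    ∀ I, IsIdealIn r ((A :: SS).flatten).toFinset I → 0 ≤ setCost c I := by
  intro n
  induction n with
  | zero => intro A SS h; exact absurd h (Nat.not_lt_zero _)
  | succ n ih =>
    intro A SS hlen hyp hA I hI
    have hirr := (hyp.2.2.1 A (List.mem_cons_self)).1
    have hJ : 0 ≤ setCost c (I ∩ A.toFinset) :=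
      cbrLE_cost_nonneg (hirr _ (isIdealIn_inter hI (subset_flatten_head A SS))) hA
    have hI' : 0 ≤ setCost c (I \ A.toFinset) := by
      cases SS with
      | nil =>
        have hsub : I \ A.toFinset = ∅ := by
          refine Finset.eq_empty_of_forall_notMem fun a ha => ?_
          rw [Finset.mem_sdiff] at ha
          have h := hI.1 ha.1
          rw [List.mem_toFinset, List.flatten_cons, List.flatten_nil, List.append_nil] at h
          exact ha.2 (List.mem_toFinset.2 h)
        rw [hsub, setCost_empty]
      | cons A₂ SS' =>
        have hA₂ : 0 ≤ setCost c A₂.toFinset := by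
          have hcbr := hyp.2.2.2 ⟨0, by simp⟩ ⟨1, by simp⟩ (by simp [Fin.lt_def])
          exact cbrLE_cost_nonneg hcbr hA
        have hIdeal' : IsIdealIn r ((A₂ :: SS').flatten).toFinset (I \ A.toFinset) := by
          rw [diff_eq_inter_tail hI.1 (fun a ha => hyp.disj ha)]
          exact isIdealIn_inter hI (subset_flatten_tail A (A₂ :: SS'))
        exact ih A₂ SS' (by simp only [List.length_cons] at hlen; omega) hyp.tail hA₂ _ hIdeal'
    have hsplit := setCost_split (c := c) I A.toFinset
    linarith

/-- CL1: every ideal of an irreducible block has cost at least `min (cost block) 0`. -/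
lemma cl1 {A : List ι} (hirr : ∀ J, IsIdealIn r A.toFinset J → cbrLE r c A.toFinset J)
    (hnd : A.Nodup) (hok : Ok r A) (hopt : listBudget c A = setBudget r c A.toFinset) :
    ∀ K, IsIdealIn r A.toFinset K → min (setCost c A.toFinset) 0 ≤ setCost c K := by
  classical
  obtain ⟨K₀, hK₀mem, hK₀min⟩ := Finset.exists_min_image
    (A.toFinset.powerset.filter fun J => IsIdealIn r A.toFinset J) (setCost c)
    ⟨∅, Finset.mem_filter.2 ⟨Finset.mem_powerset.2 (Finset.empty_subset _),
      isIdealIn_empty A.toFinset⟩⟩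
  have hK₀ideal : IsIdealIn r A.toFinset K₀ := (Finset.mem_filter.1 hK₀mem).2
  have hmain : min (setCost c A.toFinset) 0 ≤ setCost c K₀ := by
    by_contra hcon
    push_neg at hcon
    have hKneg : setCost c K₀ < 0 := lt_of_lt_of_le hcon (min_le_right _ _)
    have hKlt : setCost c K₀ < setCost c A.toFinset := lt_of_lt_of_le hcon (min_le_left _ _)
    have hb : setBudget r c A.toFinset < setBudget r c K₀ := by
      rcases hirr K₀ hK₀ideal with ⟨-, h⟩ | ⟨-, -, h⟩ | ⟨-, -, hbe, hre⟩ | ⟨-, h, -⟩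
      · linarith
      · exact h
      · exfalso
        simp only [setReturn] at hre
        rw [hbe] at hre
        linarith
      · linarith
    obtain ⟨v, hv⟩ := exists_prefix_ge_budget (isScheduleOf_toFinset hnd) hok
      (Finset.mem_powerset.1 (Finset.mem_filter.1 hK₀mem).1)
    have hPideal : IsIdealIn r A.toFinset (A.take v).toFinset :=
      isIdealIn_take (isScheduleOf_toFinset hnd) hok v
    have hPcost : setCost c (A.take v).toFinset ≤ setBudget r c A.toFinset := by
      rw [← hopt, ← listCost_eq_setCost (hnd.sublist (List.take_sublist v A))]
      exact listCost_take_le A v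
    have hMmem : (A.take v).toFinset ∪ K₀ ∈
        A.toFinset.powerset.filter fun J => IsIdealIn r A.toFinset J :=
      Finset.mem_filter.2 ⟨Finset.mem_powerset.2
        (Finset.union_subset hPideal.1 hK₀ideal.1), isIdealIn_union hPideal hK₀ideal⟩
    have hMeq : setCost c ((A.take v).toFinset ∪ K₀) + setCost c ((A.take v).toFinset ∩ K₀) =
        setCost c (A.take v).toFinset + setCost c K₀ := by
      simp only [setCost]
      exact Finset.sum_union_inter
    have hKmin' := hK₀min _ hMmem
    linarith
  intro K hK
  exact le_trans hmain (hK₀min K (Finset.mem_filter.2 ⟨Finset.mem_powerset.2 hK.1, hK⟩))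

end Main

section Psi4

variable {r : ι → ι → Prop} {c : ι → ℝ}

/-- Ψ4: for any ideal `I` of negative cost and any feasible schedule `T` of `I`,
some prefix of `T` has cost at least the budget of the first block. -/
lemma psi4 : ∀ (n : ℕ) (A : List ι) (SS : List (List ι)), SS.length < n →
    Hyp r c (A :: SS) →
    ∀ I, IsIdealIn r ((A :: SS).flatten).toFinset I → setCost c I < 0 →
    ∀ T, IsScheduleOf I T → Ok r T →
    ∃ t, setBudget r c A.toFinset ≤ listCost c (T.take t) := by
  intro n
  induction n with
  | zero => intro A SS h; exact absurd h (Nat.not_lt_zero _)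
  | succ n ih =>
    intro A SS hlen hyp I hI hIneg T hT hTok
    classical
    have hirr := (hyp.2.2.1 A (List.mem_cons_self)).1
    rcases le_or_gt (setBudget r c A.toFinset) 0 with hb0 | hb0
    · exact ⟨0, by simpa [listCost] using hb0⟩
    have hndtake : ∀ t : ℕ, (T.take t).Nodup := fun t => hT.1.sublist (List.take_sublist t T)
    have hQsub : ∀ t : ℕ, (T.take t).toFinset ⊆ I := by
      intro t a ha
      rw [← schedule_toFinset hT]
      rw [List.mem_toFinset] at *
      exact List.mem_of_mem_take ha
    have hQideal : ∀ t : ℕ, IsIdealIn r ((A :: SS).flatten).toFinset (T.take t).toFinset :=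
      fun t => isIdealIn_trans hI (isIdealIn_take hT hTok t)
    have hcost_take : ∀ t : ℕ, listCost c (T.take t) = setCost c (T.take t).toFinset :=
      fun t => listCost_eq_setCost (hndtake t)
    by_cases hs : ∃ s, setCost c ((T.take s).toFinset \ A.toFinset) < 0
    case neg =>
      push_neg at hs
      have hIfull : (T.take T.length).toFinset = I := by
        rw [List.take_length, schedule_toFinset hT]
      have hI'pos : 0 ≤ setCost c (I \ A.toFinset) := by
        have h := hs T.length
        rwa [hIfull] at h
      have hJneg : setCost c (I ∩ A.toFinset) < 0 := by
        have h := setCost_split (c := c) I A.toFinset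
        linarith
      have hbJ : setBudget r c A.toFinset ≤ setBudget r c (I ∩ A.toFinset) :=
        cbrLE_budget_le (hirr _ (isIdealIn_inter hI (subset_flatten_head A SS))) hJneg
      obtain ⟨v, hv⟩ := exists_prefix_ge_budget hT hTok
        (Finset.inter_subset_left : I ∩ A.toFinset ⊆ I)
      have hIA : (T.take v).toFinset ∩ (I ∩ A.toFinset) = (T.take v).toFinset ∩ A.toFinset := by
        ext a
        simp only [Finset.mem_inter]
        exact ⟨fun h => ⟨h.1, h.2.2⟩, fun h => ⟨h.1, hQsub v h.1, h.2⟩⟩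
      rw [hIA] at hv
      refine ⟨v, ?_⟩
      rw [hcost_take v, setCost_split (c := c) ((T.take v).toFinset) A.toFinset]
      have h2 := hs v
      linarith [le_trans hbJ hv]
    case pos =>
      set s₀ := Nat.find hs with hs₀def
      have hbad : setCost c ((T.take s₀).toFinset \ A.toFinset) < 0 := Nat.find_spec hs
      have hmin : ∀ u, u < s₀ → 0 ≤ setCost c ((T.take u).toFinset \ A.toFinset) := fun u hu =>
        not_lt.1 (Nat.find_min hs hu)
      have hs₀pos : 0 < s₀ := by
        rcases Nat.eq_zero_or_pos s₀ with h | h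
        · exfalso
          rw [h] at hbad
          simp only [List.take_zero, List.toFinset_nil, Finset.empty_sdiff, setCost_empty] at hbad
          exact lt_irrefl 0 hbad
        · exact h
      have hs₀le : s₀ ≤ T.length := by
        by_contra h
        push_neg at h
        have heq : T.take s₀ = T.take T.length := by
          rw [List.take_length, List.take_of_length_le h.le]
        rw [heq] at hbad
        exact absurd (hmin T.length h) (not_le.2 hbad)
      obtain ⟨i, hieq⟩ : ∃ i, s₀ = i + 1 := ⟨s₀ - 1, by omega⟩
      have hilen : i < T.length := by omega
      have hxtake : T.take s₀ = (T.take i).concat (T[i]'hilen) := by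
        rw [hieq]
        exact (List.take_concat_get hilen).symm
      have hQs₀ : (T.take s₀).toFinset = insert (T[i]'hilen) (T.take i).toFinset := by
        rw [hxtake, List.concat_eq_append, List.toFinset_append]
        simp only [List.toFinset_cons, List.toFinset_nil, insert_empty_eq]
        rw [Finset.union_comm]
        exact (Finset.insert_eq _ _).symm
      have hxnotA : T[i]'hilen ∉ A.toFinset := by
        intro hxA
        have heq : (T.take s₀).toFinset \ A.toFinset = (T.take i).toFinset \ A.toFinset := by
          rw [hQs₀]
          ext a
          simp only [Finset.mem_sdiff, Finset.mem_insert]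
          constructor
          · rintro ⟨rfl | h, h2⟩
            · exact absurd hxA h2
            · exact ⟨h, h2⟩
          · rintro ⟨h, h2⟩
            exact ⟨Or.inr h, h2⟩
        rw [heq] at hbad
        exact absurd (hmin i (by omega)) (not_le.2 hbad)
      by_cases ht : ∃ t, t < s₀ ∧ setCost c ((T.take t).toFinset ∩ A.toFinset) < 0
      · -- case (i): the A-part of some prefix before s₀ has negative cost
        obtain ⟨t₁, ht₁lt, ht₁neg⟩ := ht
        have hKideal : IsIdealIn r A.toFinset ((T.take t₁).toFinset ∩ A.toFinset) :=
          isIdealIn_inter (hQideal t₁) (subset_flatten_head A SS)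
        have hbK : setBudget r c A.toFinset ≤
            setBudget r c ((T.take t₁).toFinset ∩ A.toFinset) :=
          cbrLE_budget_le (hirr _ hKideal) ht₁neg
        have hsch : IsScheduleOf (T.take t₁).toFinset (T.take t₁) :=
          isScheduleOf_toFinset (hndtake t₁)
        have hokt : Ok r (T.take t₁) := List.Pairwise.sublist (List.take_sublist t₁ T) hTok
        obtain ⟨v, hv⟩ := exists_prefix_ge_budget hsch hokt
          (Finset.inter_subset_left : (T.take t₁).toFinset ∩ A.toFinset ⊆ _)
        rw [List.take_take] at hv
        have huleq : v ⊓ t₁ < s₀ := lt_of_le_of_lt inf_le_right ht₁lt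
        have hQuK : (T.take (v ⊓ t₁)).toFinset ∩ ((T.take t₁).toFinset ∩ A.toFinset) =
            (T.take (v ⊓ t₁)).toFinset ∩ A.toFinset := by
          ext a
          simp only [Finset.mem_inter]
          constructor
          · rintro ⟨h1, -, h3⟩
            exact ⟨h1, h3⟩
          · rintro ⟨h1, h2⟩
            exact ⟨h1, take_toFinset_mono inf_le_right h1, h2⟩
        rw [hQuK] at hv
        refine ⟨v ⊓ t₁, ?_⟩
        rw [hcost_take (v ⊓ t₁), setCost_split (c := c) ((T.take (v ⊓ t₁)).toFinset) A.toFinset]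
        have h1 := hmin (v ⊓ t₁) huleq
        linarith [le_trans hbK hv]
      · -- case (ii): all prefixes up to s₀ have nonnegative A-part
        push_neg at ht
        have hnt : ∀ u, u ≤ s₀ → 0 ≤ setCost c ((T.take u).toFinset ∩ A.toFinset) := by
          intro u hu
          rcases eq_or_lt_of_le hu with heq | hlt'
          · have hQeq : (T.take s₀).toFinset ∩ A.toFinset =
                (T.take i).toFinset ∩ A.toFinset := by
              rw [hQs₀]
              ext a
              simp only [Finset.mem_inter, Finset.mem_insert]
              constructor
              · rintro ⟨rfl | h, h2⟩
                · exact absurd h2 hxnotA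
                · exact ⟨h, h2⟩
              · rintro ⟨h, h2⟩
                exact ⟨Or.inr h, h2⟩
            rw [heq, hQeq]
            exact ht i (by omega)
          · exact ht u hlt'
        cases SS with
        | nil =>
          exfalso
          have hIA : I ⊆ A.toFinset := by
            intro a ha
            have h := hI.1 ha
            rw [List.mem_toFinset, List.flatten_cons, List.flatten_nil, List.append_nil] at h
            exact List.mem_toFinset.2 h
          have hempty : (T.take s₀).toFinset \ A.toFinset = ∅ :=
            Finset.eq_empty_of_forall_notMem fun a ha => by
              rw [Finset.mem_sdiff] at ha
              exact ha.2 (hIA (hQsub s₀ ha.1))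
          rw [hempty, setCost_empty] at hbad
          exact lt_irrefl 0 hbad
        | cons A₂ SS' =>
          have hI''ideal : IsIdealIn r ((A₂ :: SS').flatten).toFinset
              ((T.take s₀).toFinset \ A.toFinset) := by
            rw [diff_eq_inter_tail (hQideal s₀).1 (fun a ha => hyp.disj ha)]
            exact isIdealIn_inter (hQideal s₀) (subset_flatten_tail A (A₂ :: SS'))
          have hT'' : IsScheduleOf ((T.take s₀).toFinset \ A.toFinset)
              ((T.take s₀).filter (· ∉ A.toFinset)) := by
            refine ⟨(hndtake s₀).filter _, fun j => ?_⟩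
            simp only [List.mem_filter, decide_eq_true_eq, Finset.mem_sdiff, List.mem_toFinset]
          have hT''ok : Ok r ((T.take s₀).filter (· ∉ A.toFinset)) :=
            List.Pairwise.sublist ((List.filter_sublist).trans (List.take_sublist s₀ T)) hTok
          have hyp' : Hyp r c (A₂ :: SS') := hyp.tail
          have hA₂neg : setCost c A₂.toFinset < 0 := by
            by_contra h
            push_neg at h
            exact absurd (cl0 (SS'.length + 1) A₂ SS' (Nat.lt_succ_self _) hyp' h _ hI''ideal)
              (not_le.2 hbad)
          have hbA₂ : setBudget r c A.toFinset ≤ setBudget r c A₂.toFinset := by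
            have hcbr := hyp.2.2.2 ⟨0, by simp⟩ ⟨1, by simp⟩ (by simp [Fin.lt_def])
            exact cbrLE_budget_le hcbr hA₂neg
          obtain ⟨u', hu'⟩ := ih A₂ SS' (by simp only [List.length_cons] at hlen; omega) hyp'
            _ hI''ideal hbad _ hT'' hT''ok
          obtain ⟨w, hw⟩ := exists_take_filter (· ∉ A.toFinset) (T.take s₀) u'
          rw [← hw, List.take_take] at hu'
          have hule : w ⊓ s₀ ≤ s₀ := inf_le_right
          have hcostu : listCost c ((T.take (w ⊓ s₀)).filter (· ∉ A.toFinset)) =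
              setCost c ((T.take (w ⊓ s₀)).toFinset \ A.toFinset) := by
            rw [listCost_eq_setCost ((hndtake (w ⊓ s₀)).filter _), toFinset_filter_not_mem]
          rw [hcostu] at hu'
          refine ⟨w ⊓ s₀, ?_⟩
          rw [hcost_take (w ⊓ s₀), setCost_split (c := c) ((T.take (w ⊓ s₀)).toFinset) A.toFinset]
          have h1 := hnt (w ⊓ s₀) hule
          linarith [le_trans hbA₂ hu']

end Psi4

section CL2

variable {r : ι → ι → Prop} {c : ι → ℝ}

/-- CL2: every ideal is Pareto-dominated (budget and cost) by some prefix union. -/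
lemma cl2 (hr : IsPartialOrder ι r) :
    ∀ SS : List (List ι), Hyp r c SS → ∀ I, IsIdealIn r (SS.flatten).toFinset I →
    ∃ l ≤ SS.length,
      setBudget r c ((SS.take l).flatten.toFinset) ≤ setBudget r c I ∧
      setCost c ((SS.take l).flatten.toFinset) ≤ setCost c I := by
  intro SS
  induction SS with
  | nil =>
    intro _ I hI
    have hIe : I = ∅ := Finset.subset_empty.1 (by simpa using hI.1)
    subst hIe
    exact ⟨0, le_rfl, le_rfl, le_rfl⟩
  | cons A SS ih =>
    intro hyp I hI
    classical
    have h0 : (((A :: SS).take 0).flatten.toFinset : Finset ι) = ∅ := by simp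
    rcases le_or_gt 0 (setCost c I) with hpos | hneg
    · refine ⟨0, Nat.zero_le _, ?_, ?_⟩
      · rw [h0, setBudget_empty]
        exact setBudget_nonneg hr I
      · rw [h0, setCost_empty]
        exact hpos
    · have hirr := (hyp.2.2.1 A (List.mem_cons_self)).1
      have hopt := (hyp.2.2.1 A (List.mem_cons_self)).2
      have hndA : A.Nodup := hyp.nodup_head
      have hokA : Ok r A := hyp.ok_head
      have hAsub := subset_flatten_head A SS
      have hAneg : setCost c A.toFinset < 0 := by
        by_contra h
        push_neg at h
        exact absurd (cl0 (SS.length + 1) A SS (Nat.lt_succ_self _) hyp h I hI) (not_le.2 hneg)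
      -- (γ)
      have hJideal : IsIdealIn r A.toFinset (I ∩ A.toFinset) := isIdealIn_inter hI hAsub
      have hγ : setCost c A.toFinset ≤ setCost c (I ∩ A.toFinset) := by
        have h := cl1 hirr hndA hokA hopt _ hJideal
        rwa [min_eq_left hAneg.le] at h
      -- optimal schedule of I
      obtain ⟨T, hT, hTre, hTopt⟩ := exists_opt_schedule hr I
      have hTok : Ok r T := ok_of_respectsOrder hT.1 hTre
      -- (α)
      obtain ⟨t, hα⟩ := psi4 (SS.length + 1) A SS (Nat.lt_succ_self _) hyp I hI hneg T hT hTok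
      have hα' : setBudget r c A.toFinset ≤ setBudget r c I := by
        calc setBudget r c A.toFinset ≤ listCost c (T.take t) := hα
          _ ≤ listBudget c T := listCost_take_le T t
          _ = setBudget r c I := hTopt
      -- (β)
      obtain ⟨v, hv⟩ := exists_prefix_ge_budget hT hTok (Finset.sdiff_subset : I \ A.toFinset ⊆ I)
      have hQv : (T.take v).toFinset ⊆ I := by
        intro a ha
        rw [← schedule_toFinset hT]
        rw [List.mem_toFinset] at *
        exact List.mem_of_mem_take ha
      have hQvinter : (T.take v).toFinset ∩ (I \ A.toFinset) =
          (T.take v).toFinset \ A.toFinset := by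
        ext a
        simp only [Finset.mem_inter, Finset.mem_sdiff]
        exact ⟨fun h => ⟨h.1, h.2.2⟩, fun h => ⟨h.1, hQv h.1, h.2⟩⟩
      rw [hQvinter] at hv
      have hvcost : setCost c (T.take v).toFinset ≤ setBudget r c I := by
        rw [← hTopt, ← listCost_eq_setCost (hT.1.sublist (List.take_sublist v T))]
        exact listCost_take_le T v
      have hPvJ : setCost c A.toFinset ≤ setCost c ((T.take v).toFinset ∩ A.toFinset) := by
        have h := cl1 hirr hndA hokA hopt _
          (isIdealIn_inter (isIdealIn_trans hI (isIdealIn_take hT hTok v)) hAsub)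
        rwa [min_eq_left hAneg.le] at h
      have hβ : setCost c A.toFinset + setBudget r c (I \ A.toFinset) ≤ setBudget r c I := by
        have hsplit := setCost_split (c := c) ((T.take v).toFinset) A.toFinset
        linarith
      -- recursion
      have hI'ideal : IsIdealIn r (SS.flatten).toFinset (I \ A.toFinset) := by
        rw [diff_eq_inter_tail hI.1 (fun a ha => hyp.disj ha)]
        exact isIdealIn_inter hI (subset_flatten_tail A SS)
      obtain ⟨l', hl', hVb, hVc⟩ := ih hyp.tail _ hI'ideal
      -- schedule of A ∪ V
      obtain ⟨Tv, hTv, hTvre, hTvopt⟩ := exists_opt_schedule hr ((SS.take l').flatten.toFinset)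
      have hTvok : Ok r Tv := ok_of_respectsOrder hTv.1 hTvre
      have hVsub : ((SS.take l').flatten.toFinset : Finset ι) ⊆ (SS.flatten).toFinset :=
        (isIdealIn_flatten_take (hyp.tail.2.1) l').1
      have hdisjAV : A.Disjoint Tv := by
        intro a ha hTv'
        have hV : a ∈ ((SS.take l').flatten.toFinset : Finset ι) := (hTv.2 a).1 hTv'
        exact hyp.disj ha (List.mem_toFinset.1 (hVsub hV))
      have hschU : IsScheduleOf (A.toFinset ∪ (SS.take l').flatten.toFinset) (A ++ Tv) := by
        constructor
        · exact List.nodup_append.2 ⟨hndA, hTv.1, fun a ha b hb hab => hdisjAV ha (hab ▸ hb)⟩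
        · intro j
          rw [List.mem_append, Finset.mem_union]
          constructor
          · rintro (h | h)
            · exact Or.inl (List.mem_toFinset.2 h)
            · exact Or.inr ((hTv.2 j).1 h)
          · rintro (h | h)
            · exact Or.inl (List.mem_toFinset.1 h)
            · exact Or.inr ((hTv.2 j).2 h)
      have hokU : Ok r (A ++ Tv) := by
        rw [Ok, List.pairwise_append]
        refine ⟨hokA, hTvok, fun a ha b hb => ?_⟩
        have hbV : b ∈ SS.flatten :=
          List.mem_toFinset.1 (hVsub ((hTv.2 b).1 hb))
        exact hyp.cross ha hbV
      have hbU : setBudget r c (A.toFinset ∪ (SS.take l').flatten.toFinset) ≤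
          max (setBudget r c A.toFinset)
            (setCost c A.toFinset + setBudget r c ((SS.take l').flatten.toFinset)) := by
        have h := setBudget_le (c := c) hschU (respectsOrder_of_ok hokU)
        rwa [listBudget_append, hopt, hTvopt, listCost_eq_setCost hndA] at h
      have hUeq : (((A :: SS).take (l' + 1)).flatten.toFinset : Finset ι) =
          A.toFinset ∪ (SS.take l').flatten.toFinset := by
        rw [List.take_succ_cons, List.flatten_cons, List.toFinset_append]
      have hdisjAV' : Disjoint A.toFinset ((SS.take l').flatten.toFinset : Finset ι) := by
        refine Finset.disjoint_left.2 fun a ha ha' => ?_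
        exact hyp.disj (List.mem_toFinset.1 ha) (List.mem_toFinset.1 (hVsub ha'))
      refine ⟨l' + 1, by simpa using Nat.succ_le_succ hl', ?_, ?_⟩
      · rw [hUeq]
        refine le_trans hbU (max_le hα' ?_)
        calc setCost c A.toFinset + setBudget r c ((SS.take l').flatten.toFinset)
            ≤ setCost c A.toFinset + setBudget r c (I \ A.toFinset) := by linarith
          _ ≤ setBudget r c I := hβ
      · rw [hUeq]
        have hUcost : setCost c (A.toFinset ∪ (SS.take l').flatten.toFinset) =
            setCost c A.toFinset + setCost c ((SS.take l').flatten.toFinset) := by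
          simp only [setCost]
          exact Finset.sum_union hdisjAV'
        have hIcost := setCost_split (c := c) I A.toFinset
        linarith

end CL2

theorem prefix_min_cost (r : ι → ι → Prop) (hr : IsPartialOrder ι r)
    (c : ι → ℝ) (N : Finset ι) (SS : List (List ι))
    (h : IncIrrStructure r c N SS) (B : ENNReal) :
    ∃ l ≤ SS.length,
      IsIdealIn r N ((SS.take l).flatten.toFinset) ∧
      ENNReal.ofReal (setBudget r c ((SS.take l).flatten.toFinset)) ≤ B ∧
      ∀ I, IsIdealIn r N I → ENNReal.ofReal (setBudget r c I) ≤ B →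
        setCost c ((SS.take l).flatten.toFinset) ≤ setCost c I := by
  classical
  obtain ⟨⟨hnd, hmem⟩, hre, hblocks, hinc⟩ := h
  have hN : N = (SS.flatten).toFinset := by
    ext a
    rw [List.mem_toFinset]
    exact (hmem a).symm
  subst hN
  have hok : Ok r SS.flatten := ok_of_respectsOrder hnd hre
  have hyp : Hyp r c SS := by
    refine ⟨hnd, hok, fun S hS => ?_, hinc⟩
    obtain ⟨hirr, -, hopt⟩ := hblocks S hS
    exact ⟨hirr.2, hopt⟩
  have h0F : 0 ∈ (Finset.range (SS.length + 1)).filter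
      (fun l => ENNReal.ofReal (setBudget r c ((SS.take l).flatten.toFinset)) ≤ B) := by
    rw [Finset.mem_filter, Finset.mem_range]
    refine ⟨Nat.succ_pos _, ?_⟩
    have he : ((SS.take 0).flatten.toFinset : Finset ι) = ∅ := by simp
    rw [he, setBudget_empty, ENNReal.ofReal_zero]
    exact zero_le
  obtain ⟨l, hlF, hlmin⟩ := Finset.exists_min_image
    ((Finset.range (SS.length + 1)).filter
      (fun l => ENNReal.ofReal (setBudget r c ((SS.take l).flatten.toFinset)) ≤ B))
    (fun l => setCost c ((SS.take l).flatten.toFinset)) ⟨0, h0F⟩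
  rw [Finset.mem_filter, Finset.mem_range] at hlF
  refine ⟨l, by omega, isIdealIn_flatten_take hok l, hlF.2, ?_⟩
  intro I hIideal hIB
  obtain ⟨l₁, hl₁, hbl₁, hcl₁⟩ := cl2 hr SS hyp I hIideal
  have hl₁F : l₁ ∈ (Finset.range (SS.length + 1)).filter
      (fun l => ENNReal.ofReal (setBudget r c ((SS.take l).flatten.toFinset)) ≤ B) := by
    rw [Finset.mem_filter, Finset.mem_range]
    exact ⟨by omega, le_trans (ENNReal.ofReal_le_ofReal hbl₁) hIB⟩
  exact le_trans (hlmin l₁ hl₁F) hcl₁
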